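/- Let A be a constant real skew-symmetric 3×3 matrix and B₀ a constant real symmetric 3×3 matrix with trace 0, and set B(t) = e^{tA} B₀ e^{−tA} (which is symmetric traceless for every t, and is the solution of B′ = AB − BA given in the paper by the 5×5 matrix exponential exp(Mt)). Then v(t,x) = Ax, H(t,x) = B(t)x and p(t,x) = (ρ/2)|Ax|² solve the MHD equations on ℝ × ℝ³. (Proposition 2.3.) -/

import Mathlib

open Real Matrix

/-- Partial derivative in the `i`-th spatial coordinate. -/
noncomputable def pd (i : Fin 3) (f : (Fin 3 → ℝ) → ℝ) (x : Fin 3 → ℝ) : ℝ :=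
  deriv (fun s => f (Function.update x i s)) (x i)

/-- Divergence of a vector field on `ℝ³`. -/
noncomputable def vdiv (F : (Fin 3 → ℝ) → (Fin 3 → ℝ)) (x : Fin 3 → ℝ) : ℝ :=
  ∑ i, pd i (fun y => F y i) x

/-- Curl of a vector field on `ℝ³`. -/
noncomputable def vcurl (F : (Fin 3 → ℝ) → (Fin 3 → ℝ)) (x : Fin 3 → ℝ) : Fin 3 → ℝ :=
  ![pd 1 (fun y => F y 2) x - pd 2 (fun y => F y 1) x,
    pd 2 (fun y => F y 0) x - pd 0 (fun y => F y 2) x,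
    pd 0 (fun y => F y 1) x - pd 1 (fun y => F y 0) x]

/-- Laplacian of a scalar field on `ℝ³`. -/
noncomputable def slap (f : (Fin 3 → ℝ) → ℝ) (x : Fin 3 → ℝ) : ℝ :=
  ∑ i, pd i (fun y => pd i f y) x

/-- Cross product on `ℝ³`. -/
def cross3 (u v : Fin 3 → ℝ) : Fin 3 → ℝ :=
  ![u 1 * v 2 - u 2 * v 1, u 2 * v 0 - u 0 * v 2, u 0 * v 1 - u 1 * v 0]

/-- The incompressible viscous MHD equations with finite electrical conductivity:
(M1) `∇·v = 0`, (M2) momentum, (M3) `∇·H = 0`, (M4) induction. -/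
def MHD (ρ ν μ₀ η : ℝ) (v H : ℝ → (Fin 3 → ℝ) → (Fin 3 → ℝ))
    (p : ℝ → (Fin 3 → ℝ) → ℝ) : Prop :=
  ∀ (t : ℝ) (x : Fin 3 → ℝ),
    vdiv (v t) x = 0 ∧
    (∀ i, deriv (fun s => v s x i) t
        + (∑ j, v t x j * pd j (fun y => v t y i) x)
        - μ₀ * cross3 (H t x) (vcurl (H t) x) i
        + (1 / ρ) * pd i (p t) x
        = ν * slap (fun y => v t y i) x) ∧
    vdiv (H t) x = 0 ∧
    (∀ i, deriv (fun s => H s x i) t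
        = vcurl (fun y => cross3 (v t y) (H t y)) x i
          + η * slap (fun y => H t y i) x)

/- ### Auxiliary lemmas -/

lemma hasDerivAt_update_sum (c x : Fin 3 → ℝ) (j : Fin 3) :
    HasDerivAt (fun s => ∑ l, c l * Function.update x j s l) (c j) (x j) := by
  have key : ∀ s : ℝ, ∑ l, c l * Function.update x j s l
      = c j * s + ∑ l ∈ Finset.univ.erase j, c l * x l := by
    intro s
    rw [← Finset.add_sum_erase _ _ (Finset.mem_univ j)]
    simp only [Function.update_self]
    congr 1
    refine Finset.sum_congr rfl fun l hl => ?_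
    rw [Function.update_of_ne (Finset.mem_erase.mp hl).1]
  simp only [key]
  simpa using (((hasDerivAt_id (x j)).const_mul (c j)).add_const
    (∑ l ∈ Finset.univ.erase j, c l * x l))

lemma hasDerivAt_mulVec_update (M : Matrix (Fin 3) (Fin 3) ℝ) (a j : Fin 3)
    (x : Fin 3 → ℝ) :
    HasDerivAt (fun s => M.mulVec (Function.update x j s) a) (M a j) (x j) := by
  have h := hasDerivAt_update_sum (fun l => M a l) x j
  simpa [Matrix.mulVec, dotProduct] using h

lemma pd_const (c : ℝ) (j : Fin 3) (x : Fin 3 → ℝ) : pd j (fun _ => c) x = 0 := by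
  simp [pd]

lemma pd_lin (M : Matrix (Fin 3) (Fin 3) ℝ) (a j : Fin 3) (x : Fin 3 → ℝ) :
    pd j (fun y => M.mulVec y a) x = M a j :=
  (hasDerivAt_mulVec_update M a j x).deriv

lemma pd_quad_sub (M N : Matrix (Fin 3) (Fin 3) ℝ) (a b c d j : Fin 3) (x : Fin 3 → ℝ) :
    pd j (fun y => M.mulVec y a * N.mulVec y b - M.mulVec y c * N.mulVec y d) x
      = (M a j * N.mulVec x b + M.mulVec x a * N b j)
        - (M c j * N.mulVec x d + M.mulVec x c * N d j) := by
  have h := ((hasDerivAt_mulVec_update M a j x).fun_mul (hasDerivAt_mulVec_update N b j x)).fun_sub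
    ((hasDerivAt_mulVec_update M c j x).fun_mul (hasDerivAt_mulVec_update N d j x))
  have h2 := h.deriv
  simp only [Function.update_eq_self] at h2
  simpa [pd] using h2

lemma pd_pressure (ρ : ℝ) (M : Matrix (Fin 3) (Fin 3) ℝ) (i : Fin 3) (x : Fin 3 → ℝ) :
    pd i (fun y => ρ / 2 * (M.mulVec y ⬝ᵥ M.mulVec y)) x
      = ρ / 2 * ∑ k, (M k i * M.mulVec x k + M.mulVec x k * M k i) := by
  have h : HasDerivAt
      (fun s => ρ / 2 * ∑ k, M.mulVec (Function.update x i s) k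
        * M.mulVec (Function.update x i s) k)
      (ρ / 2 * ∑ k, (M k i * M.mulVec x k + M.mulVec x k * M k i)) (x i) := by
    refine HasDerivAt.const_mul _ (HasDerivAt.fun_sum fun k _ => ?_)
    have h := (hasDerivAt_mulVec_update M k i x).fun_mul (hasDerivAt_mulVec_update M k i x)
    simpa [Function.update_eq_self] using h
  have h2 := h.deriv
  simpa [pd, dotProduct] using h2

lemma slap_lin (M : Matrix (Fin 3) (Fin 3) ℝ) (a : Fin 3) (x : Fin 3 → ℝ) :
    slap (fun y => M.mulVec y a) x = 0 := by
  simp [slap, pd_lin, pd_const]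

lemma hasDerivAt_conj (A B₀ : Matrix (Fin 3) (Fin 3) ℝ) (t : ℝ) (x : Fin 3 → ℝ) (i : Fin 3) :
    HasDerivAt
      (fun s : ℝ =>
        (NormedSpace.exp (s • A) * B₀ * NormedSpace.exp (-(s • A))).mulVec x i)
      ((A * (NormedSpace.exp (t • A) * B₀ * NormedSpace.exp (-(t • A)))
        - (NormedSpace.exp (t • A) * B₀ * NormedSpace.exp (-(t • A))) * A).mulVec x i)
      t := by
  letI : SeminormedRing (Matrix (Fin 3) (Fin 3) ℝ) := Matrix.linftyOpSemiNormedRing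
  letI : NormedRing (Matrix (Fin 3) (Fin 3) ℝ) := Matrix.linftyOpNormedRing
  letI : NormedAlgebra ℝ (Matrix (Fin 3) (Fin 3) ℝ) := Matrix.linftyOpNormedAlgebra
  have h1 : HasDerivAt (fun s : ℝ => NormedSpace.exp (s • A))
      (A * NormedSpace.exp (t • A)) t := hasDerivAt_exp_smul_const' A t
  have h2 : HasDerivAt (fun s : ℝ => NormedSpace.exp (-(s • A)))
      (NormedSpace.exp (-(t • A)) * -A) t := by
    have h := hasDerivAt_exp_smul_const (𝕂 := ℝ) (-A) t
    simp only [← smul_neg]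
    exact h
  have h3 := (h1.mul_const B₀).mul h2
  let L : Matrix (Fin 3) (Fin 3) ℝ →ₗ[ℝ] ℝ :=
    { toFun := fun M => M.mulVec x i
      map_add' := fun M N => by simp [Matrix.add_mulVec]
      map_smul' := fun c M => by simp [Matrix.smul_mulVec] }
  have h4 : HasDerivAt
      (fun s : ℝ =>
        (NormedSpace.exp (s • A) * B₀ * NormedSpace.exp (-(s • A))).mulVec x i)
      (L.toContinuousLinearMap
        (A * NormedSpace.exp (t • A) * B₀ * NormedSpace.exp (-(t • A))
          + NormedSpace.exp (t • A) * B₀ * (NormedSpace.exp (-(t • A)) * -A))) t :=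
    (L.toContinuousLinearMap.hasFDerivAt).comp_hasDerivAt t h3
  have hD : A * NormedSpace.exp (t • A) * B₀ * NormedSpace.exp (-(t • A))
      + NormedSpace.exp (t • A) * B₀ * (NormedSpace.exp (-(t • A)) * -A)
      = A * (NormedSpace.exp (t • A) * B₀ * NormedSpace.exp (-(t • A)))
        - (NormedSpace.exp (t • A) * B₀ * NormedSpace.exp (-(t • A))) * A := by
    noncomm_ring
  rw [hD] at h4
  exact h4

/-- Proposition 2.3: `v = Ax` with `A` constant skew-symmetric,
`H(t) = e^{tA} B₀ e^{-tA} x` with `B₀` symmetric traceless. -/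
theorem stmt_2 (ρ ν μ₀ η : ℝ) (hρ : 0 < ρ)
    (A B₀ : Matrix (Fin 3) (Fin 3) ℝ)
    (hA : Aᵀ = -A) (hB : B₀ᵀ = B₀) (htr : B₀.trace = 0) :
    MHD ρ ν μ₀ η (fun _ x => A.mulVec x)
      (fun t x =>
        (NormedSpace.exp (t • A) * B₀ * NormedSpace.exp (-(t • A))).mulVec x)
      (fun _ x => (ρ / 2) * (A.mulVec x ⬝ᵥ A.mulVec x)) := by
  have hA' : ∀ i j, A j i = -(A i j) := by
    intro i j
    have h := congrFun (congrFun hA i) j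
    simpa using h
  have d0 : A 0 0 = 0 := by have := hA' 0 0; linarith
  have d1 : A 1 1 = 0 := by have := hA' 1 1; linarith
  have d2 : A 2 2 = 0 := by have := hA' 2 2; linarith
  have s10 : A 1 0 = -A 0 1 := hA' 0 1
  have s20 : A 2 0 = -A 0 2 := hA' 0 2
  have s21 : A 2 1 = -A 1 2 := hA' 1 2
  intro t x
  set Bt := NormedSpace.exp (t • A) * B₀ * NormedSpace.exp (-(t • A)) with hBt
  -- `exp (-(t•A)) * exp (t•A) = 1`
  have hgf : NormedSpace.exp (-(t • A)) * NormedSpace.exp (t • A) = 1 := by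
    rw [← Matrix.exp_add_of_commute _ _ ((Commute.refl (t • A)).neg_left),
      neg_add_cancel, NormedSpace.exp_zero]
  have htrBt : Bt 0 0 + Bt 1 1 + Bt 2 2 = 0 := by
    have h1 : Bt.trace = B₀.trace := by
      rw [hBt, Matrix.trace_mul_comm, ← mul_assoc, hgf, one_mul]
    have h2 := h1.trans htr
    simpa [Matrix.trace, Matrix.diag, Fin.sum_univ_three] using h2
  have hBtT : Btᵀ = Bt := by
    rw [hBt, Matrix.transpose_mul, Matrix.transpose_mul, ← Matrix.exp_transpose,
      ← Matrix.exp_transpose, Matrix.transpose_neg, Matrix.transpose_smul, hA, smul_neg,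
      neg_neg, hB, mul_assoc]
  have hBt' : ∀ i j, Bt j i = Bt i j := by
    intro i j
    have h := congrFun (congrFun hBtT i) j
    simpa using h
  have b10 : Bt 1 0 = Bt 0 1 := hBt' 0 1
  have b20 : Bt 2 0 = Bt 0 2 := hBt' 0 2
  have b21 : Bt 2 1 = Bt 1 2 := hBt' 1 2
  have b22 : Bt 2 2 = -Bt 0 0 - Bt 1 1 := by linarith
  refine ⟨?_, ?_, ?_, ?_⟩
  · -- divergence of v
    simp only [vdiv, pd_lin, Fin.sum_univ_three]
    linarith
  · -- momentum equation
    intro i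
    beta_reduce
    simp only [← hBt]
    simp only [deriv_const, deriv_const', vcurl, cross3, pd_lin, pd_pressure, slap_lin,
      mul_zero, Matrix.cons_val_zero, Matrix.cons_val_one, Matrix.head_cons,
      Matrix.cons_val_two, Matrix.tail_cons]
    have hρ0 : ρ ≠ 0 := ne_of_gt hρ
    fin_cases i <;>
    · simp only [Fin.zero_eta, Fin.mk_one, Fin.reduceFinMk, Fin.isValue,
        Matrix.cons_val_zero, Matrix.cons_val_one, Matrix.head_cons, Matrix.cons_val_two,
        Matrix.tail_cons, Fin.sum_univ_three]
      simp only [Matrix.mulVec, dotProduct, Fin.sum_univ_three]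
      simp only [d0, d1, d2, s10, s20, s21, b10, b20, b21, b22]
      field_simp
      ring
  · -- divergence of H
    simp only [vdiv, pd_lin, Fin.sum_univ_three]
    linarith
  · -- induction equation
    intro i
    beta_reduce
    rw [(hasDerivAt_conj A B₀ t x i).deriv]
    simp only [← hBt]
    simp only [vcurl, cross3, Matrix.cons_val_zero, Matrix.cons_val_one, Matrix.head_cons,
      Matrix.cons_val_two, Matrix.tail_cons, pd_quad_sub, slap_lin, mul_zero, add_zero]
    fin_cases i <;>
    · simp only [Fin.zero_eta, Fin.mk_one, Fin.reduceFinMk, Fin.isValue,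
        Matrix.cons_val_zero, Matrix.cons_val_one, Matrix.head_cons, Matrix.cons_val_two,
        Matrix.tail_cons]
      simp only [Matrix.mulVec, dotProduct, Matrix.sub_apply, Matrix.mul_apply,
        Fin.sum_univ_three]
      simp only [d0, d1, d2, s10, s20, s21, b10, b20, b21, b22]
      ring
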